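/- Let (Ω, P) be a probability space, let Z : Ω → ℝ be a random variable whose law is the Gaussian distribution N(μ, σ²) with μ ∈ ℝ and σ ≥ 0, and let ζ : Ω → ℝ be a nonnegative random variable independent of Z such that exp(−ζ/2) is integrable. Then E[ max(0, Z − μ − √ζ · σ) ] ≤ (σ/√(2π)) · E[ exp(−ζ/2) ]. -/

import Mathlib

open MeasureTheory ProbabilityTheory Real Filter Set
open scoped NNReal ENNReal

lemma aux_integrable_id_mul_exp : Integrable (fun x : ℝ => x * Real.exp (-x^2/2)) := by
  have h := integrable_mul_exp_neg_mul_sq (b := (1:ℝ)/2) (by norm_num)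
  have he : (fun x : ℝ => x * Real.exp (-(1/2) * x^2)) = fun x => x * Real.exp (-x^2/2) := by
    funext x; congr 1; ring
  rwa [he] at h

lemma aux_integrable_exp_sq : Integrable (fun x : ℝ => Real.exp (-x^2/2)) := by
  have h := integrable_exp_neg_mul_sq (b := (1:ℝ)/2) (by norm_num)
  have he : (fun x : ℝ => Real.exp (-(1/2) * x^2)) = fun x => Real.exp (-x^2/2) := by
    funext x; congr 1; ring
  rwa [he] at h

lemma aux_integral_Ioi (c : ℝ) :
    ∫ x in Set.Ioi c, x * Real.exp (-x^2/2) = Real.exp (-c^2/2) := by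
  have hderiv : ∀ x ∈ Set.Ici c,
      HasDerivAt (fun y : ℝ => -Real.exp (-y^2/2)) (x * Real.exp (-x^2/2)) x := by
    intro x _
    have h1 : HasDerivAt (fun y : ℝ => -y^2/2) (-x) x := by
      have h0 := (hasDerivAt_pow 2 x).neg.div_const 2
      refine h0.congr_deriv ?_
      push_cast
      ring
    have h2 := h1.exp.neg
    refine h2.congr_deriv ?_
    ring
  have h1 : Tendsto (fun y : ℝ => (-(1:ℝ)/2) * y^2) atTop atBot :=
    (tendsto_pow_atTop two_ne_zero).const_mul_atTop_of_neg (by norm_num)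
  have h2 : Tendsto (fun y : ℝ => Real.exp (-y^2/2)) atTop (nhds 0) := by
    have h3 := Real.tendsto_exp_atBot.comp h1
    refine h3.congr fun y => ?_
    simp only [Function.comp_apply]
    congr 1
    ring
  have htend : Tendsto (fun y : ℝ => -Real.exp (-y^2/2)) atTop (nhds 0) := by
    rw [show (0:ℝ) = -0 by ring]
    exact h2.neg
  have hcalc := integral_Ioi_of_hasDerivAt_of_tendsto' hderiv
    (aux_integrable_id_mul_exp.integrableOn) htend
  rw [hcalc]
  ring

lemma aux_std_pdf (x : ℝ) :
    gaussianPDFReal 0 1 x = (Real.sqrt (2*π))⁻¹ * Real.exp (-x^2/2) := by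
  simp [gaussianPDFReal]

lemma aux_pdf_coe : gaussianPDF 0 1
    = fun x => ((Real.toNNReal (gaussianPDFReal 0 1 x) : ℝ≥0) : ℝ≥0∞) := rfl

lemma aux_std_max_bound (c : ℝ) (hc : 0 ≤ c) :
    ∫ x, max 0 (x - c) ∂(gaussianReal 0 1) ≤ (Real.sqrt (2*π))⁻¹ * Real.exp (-c^2/2) := by
  rw [gaussianReal_of_var_ne_zero 0 one_ne_zero]
  rw [aux_pdf_coe, integral_withDensity_eq_integral_smul
    ((measurable_gaussianPDFReal 0 1).real_toNNReal)]
  have hsm : ∀ x : ℝ, (Real.toNNReal (gaussianPDFReal 0 1 x) : ℝ≥0) • max 0 (x - c)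
      = gaussianPDFReal 0 1 x * max 0 (x - c) := by
    intro x
    rw [NNReal.smul_def, smul_eq_mul, Real.coe_toNNReal _ (gaussianPDFReal_nonneg 0 1 x)]
  simp_rw [hsm]
  have heq : (fun x : ℝ => gaussianPDFReal 0 1 x * max 0 (x - c))
      = Set.indicator (Set.Ioi c) (fun x => gaussianPDFReal 0 1 x * (x - c)) := by
    funext x
    by_cases hx : c < x
    · rw [Set.indicator_of_mem (show x ∈ Set.Ioi c from hx), max_eq_right (by linarith)]
    · rw [Set.indicator_of_notMem (show x ∉ Set.Ioi c from hx), max_eq_left (by push_neg at hx; linarith), mul_zero]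
  rw [heq, integral_indicator measurableSet_Ioi]
  have hint1 : Integrable (fun x : ℝ => gaussianPDFReal 0 1 x * x) := by
    have h := aux_integrable_id_mul_exp.const_mul ((Real.sqrt (2*π))⁻¹)
    refine h.congr (Filter.Eventually.of_forall fun x => ?_)
    simp only [aux_std_pdf]; ring
  have hint2 : Integrable (fun x : ℝ => gaussianPDFReal 0 1 x * (x - c)) := by
    have h := hint1.sub ((integrable_gaussianPDFReal 0 1).mul_const c)
    refine h.congr (Filter.Eventually.of_forall fun x => ?_)
    simp only [Pi.sub_apply]; ring
  have hmono : ∫ x in Set.Ioi c, gaussianPDFReal 0 1 x * (x - c)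
      ≤ ∫ x in Set.Ioi c, gaussianPDFReal 0 1 x * x := by
    refine setIntegral_mono_on hint2.integrableOn hint1.integrableOn measurableSet_Ioi ?_
    intro x _
    have h := gaussianPDFReal_nonneg 0 1 x
    nlinarith
  refine hmono.trans_eq ?_
  have heq2 : (fun x : ℝ => gaussianPDFReal 0 1 x * x)
      = fun x => (Real.sqrt (2*π))⁻¹ * (x * Real.exp (-x^2/2)) := by
    funext x; rw [aux_std_pdf]; ring
  rw [heq2, integral_const_mul, aux_integral_Ioi]

lemma aux_map (μ σ : ℝ) (hσ : 0 < σ) :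
    gaussianReal μ (Real.toNNReal (σ^2))
      = Measure.map (fun x => σ * x + μ) (gaussianReal 0 1) := by
  have hv : Real.toNNReal (σ^2) = ⟨σ^2, sq_nonneg σ⟩ * 1 := by
    rw [← NNReal.coe_inj]
    simp [Real.coe_toNNReal _ (sq_nonneg σ)]
    exact (mul_one (σ^2)).symm
  have h1 : Measure.map (fun x : ℝ => σ * x) (gaussianReal 0 1)
      = gaussianReal 0 (⟨σ^2, sq_nonneg σ⟩ * 1) := by
    have h := gaussianReal_map_const_mul (μ := 0) (v := 1) σ
    rw [h, mul_zero]; rfl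
  have h2 : Measure.map (fun x : ℝ => x + μ) (gaussianReal 0 (⟨σ^2, sq_nonneg σ⟩ * 1))
      = gaussianReal (0 + μ) (⟨σ^2, sq_nonneg σ⟩ * 1) := gaussianReal_map_add_const μ
  rw [zero_add] at h2
  rw [hv, ← h2, ← h1]
  calc Measure.map (fun x : ℝ => x + μ) (Measure.map (fun x : ℝ => σ * x) (gaussianReal 0 1))
      = Measure.map ((fun x : ℝ => x + μ) ∘ (fun x : ℝ => σ * x)) (gaussianReal 0 1) :=
        Measure.map_map (by fun_prop) (by fun_prop)
    _ = _ := rfl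

lemma aux_integrable_abs (μ σ : ℝ) (hσ : 0 ≤ σ) :
    Integrable (fun z : ℝ => |z - μ|) (gaussianReal μ (Real.toNNReal (σ^2))) := by
  have hcont : Continuous fun z : ℝ => |z - μ| := by fun_prop
  rcases eq_or_lt_of_le hσ with hσ0 | hσpos
  · rw [← hσ0, show Real.toNNReal ((0:ℝ)^2) = 0 by simp, gaussianReal_zero_var]
    refine ⟨hcont.aestronglyMeasurable, ?_⟩
    rw [HasFiniteIntegral, lintegral_dirac]
    exact ENNReal.coe_lt_top
  · rw [aux_map μ σ hσpos,
      integrable_map_measure (by rw [← aux_map μ σ hσpos]; exact hcont.aestronglyMeasurable)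
        (by fun_prop)]
    simp only [Function.comp_def]
    rw [gaussianReal_of_var_ne_zero 0 one_ne_zero, aux_pdf_coe,
      integrable_withDensity_iff_integrable_smul ((measurable_gaussianPDFReal 0 1).real_toNNReal)]
    have h := (aux_integrable_id_mul_exp.abs).const_mul ((Real.sqrt (2*π))⁻¹ * σ)
    refine h.congr (Filter.Eventually.of_forall fun x => ?_)
    simp only [NNReal.smul_def, smul_eq_mul]
    rw [Real.coe_toNNReal _ (gaussianPDFReal_nonneg 0 1 x), aux_std_pdf,
      show σ * x + μ - μ = σ * x by ring, abs_mul, abs_mul,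
      abs_of_pos hσpos, abs_of_pos (Real.exp_pos _)]
    ring

lemma aux_gaussian_max_bound (μ σ : ℝ) (hσ : 0 ≤ σ) (t : ℝ) (ht : 0 ≤ t) :
    ∫ z, max 0 (z - μ - Real.sqrt t * σ) ∂(gaussianReal μ (Real.toNNReal (σ^2)))
      ≤ σ / Real.sqrt (2*π) * Real.exp (-t/2) := by
  rcases eq_or_lt_of_le hσ with hσ0 | hσpos
  · rw [← hσ0, show Real.toNNReal ((0:ℝ)^2) = 0 by simp, gaussianReal_zero_var, integral_dirac]
    simp [div_nonneg, Real.sqrt_nonneg, Real.exp_nonneg]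
  · have hf : Continuous fun z : ℝ => max 0 (z - μ - Real.sqrt t * σ) :=
      Continuous.max continuous_const (by fun_prop)
    rw [aux_map μ σ hσpos, integral_map (by fun_prop) hf.aestronglyMeasurable]
    have heq : (fun x : ℝ => max 0 (σ * x + μ - μ - Real.sqrt t * σ))
        = fun x => σ * max 0 (x - Real.sqrt t) := by
      funext x
      rw [mul_max_of_nonneg _ _ hσ, mul_zero]
      congr 1
      ring
    rw [heq, integral_const_mul]
    have hb := aux_std_max_bound (Real.sqrt t) (Real.sqrt_nonneg t)
    have h := mul_le_mul_of_nonneg_left hb hσ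
    refine h.trans_eq ?_
    rw [Real.sq_sqrt ht]
    ring

theorem expected_positive_part_randomized_ucb_bound
    {Ω : Type*} [MeasurableSpace Ω] (P : Measure Ω) [IsProbabilityMeasure P]
    (μ σ : ℝ) (hσ : 0 ≤ σ)
    (Z : Ω → ℝ) (hZ : Measure.map Z P = gaussianReal μ (Real.toNNReal (σ ^ 2)))
    (ζ : Ω → ℝ) (hζ : ∀ ω, 0 ≤ ζ ω)
    (hindep : IndepFun ζ Z P)
    (hint : Integrable (fun ω => Real.exp (-ζ ω / 2)) P) :
    ∫ ω, max 0 (Z ω - μ - Real.sqrt (ζ ω) * σ) ∂P ≤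
      (σ / Real.sqrt (2 * π)) * ∫ ω, Real.exp (-ζ ω / 2) ∂P := by
  have hZm : AEMeasurable Z P := by
    apply aemeasurable_of_map_neZero
    rw [hZ]
    infer_instance
  have hζm : AEMeasurable ζ P := by
    have h := hint.aemeasurable
    have h2 : (fun ω => (-2 : ℝ) * Real.log (Real.exp (-ζ ω / 2))) = ζ := by
      funext ω; rw [Real.log_exp]; ring
    rw [← h2]
    exact ((Real.measurable_log.comp_aemeasurable h).const_mul _)
  set ρ := P.map ζ with hρ
  have hρprob : IsProbabilityMeasure ρ := by rw [hρ]; exact Measure.isProbabilityMeasure_map (μ := P) hζm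
  set ν := gaussianReal μ (Real.toNNReal (σ^2)) with hν
  have hZ' : Measure.map Z P = ν := by rw [hν]; exact_mod_cast hZ
  have hprod : P.map (fun ω => (ζ ω, Z ω)) = ρ.prod ν := by
    rw [hρ, ← hZ']
    exact (indepFun_iff_map_prod_eq_prod_map_map hζm hZm).mp hindep
  set g : ℝ × ℝ → ℝ := fun p => max 0 (p.2 - μ - Real.sqrt p.1 * σ) with hg
  have hgc : Continuous g := Continuous.max continuous_const (by fun_prop)
  have habs : Integrable (fun z : ℝ => |z - μ|) ν := aux_integrable_abs μ σ hσ
  have hgint : Integrable g (ρ.prod ν) := by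
    have hmapsnd : Measure.map Prod.snd (ρ.prod ν) = ν := by
      rw [Measure.map_snd_prod]; simp
    have hsnd : Integrable (fun p : ℝ × ℝ => |p.2 - μ|) (ρ.prod ν) := by
      have hiff := (integrable_map_measure (μ := ρ.prod ν) (f := Prod.snd)
        (g := fun z : ℝ => |z - μ|)
        (by rw [hmapsnd]; exact habs.aestronglyMeasurable) measurable_snd.aemeasurable)
      rw [hmapsnd] at hiff
      exact hiff.mp habs
    refine hsnd.mono hgc.aestronglyMeasurable (Filter.Eventually.of_forall fun p => ?_)
    simp only [hg, Real.norm_eq_abs, abs_abs]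
    rw [abs_of_nonneg (le_max_left _ _)]
    have hs : 0 ≤ Real.sqrt p.1 * σ := mul_nonneg (Real.sqrt_nonneg _) hσ
    have h1 : p.2 - μ - Real.sqrt p.1 * σ ≤ |p.2 - μ| := by
      have h2 := le_abs_self (p.2 - μ); linarith
    exact max_le (abs_nonneg _) h1
  have hLHS : ∫ ω, max 0 (Z ω - μ - Real.sqrt (ζ ω) * σ) ∂P = ∫ p, g p ∂(ρ.prod ν) := by
    rw [← hprod, integral_map (hζm.prodMk hZm) hgc.aestronglyMeasurable]
  rw [hLHS, integral_prod _ hgint]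
  have hRHSint : Integrable (fun t : ℝ => Real.exp (-t / 2)) ρ := by
    rw [hρ, integrable_map_measure
      (Continuous.aestronglyMeasurable (by fun_prop)) hζm]
    exact hint
  have hmono : ∫ t, (∫ z, g (t, z) ∂ν) ∂ρ
      ≤ ∫ t, σ / Real.sqrt (2 * π) * Real.exp (-t / 2) ∂ρ := by
    refine integral_mono_ae (hgint.integral_prod_left) (hRHSint.const_mul _) ?_
    have hae : ∀ᵐ t ∂ρ, 0 ≤ t := by
      rw [hρ, ae_map_iff hζm measurableSet_Ici]
      exact Filter.Eventually.of_forall hζ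
    filter_upwards [hae] with t ht
    simpa [hg, neg_div] using aux_gaussian_max_bound μ σ hσ t ht
  refine hmono.trans_eq ?_
  rw [integral_const_mul]
  congr 1
  rw [hρ, integral_map hζm (Continuous.aestronglyMeasurable (by fun_prop))]
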